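/- For i.i.d. random variables X₁,…,Xₙ with common subexponential distribution F, and constants 0 < a ≤ b < ∞, the relation P(Σ_{i=1}^n cᵢXᵢ > x) ∼ Σ_{i=1}^n P(cᵢXᵢ > x) as x → ∞ holds uniformly for (c₁,…,cₙ) ∈ [a,b]ⁿ. -/

import Mathlib

set_option linter.unusedSectionVars false
set_option maxHeartbeats 1000000

open MeasureTheory Filter ProbabilityTheory

/-- The tail `1 - F(x)` of a distribution `μ` on `ℝ`. -/
noncomputable def mtail (μ : Measure ℝ) (x : ℝ) : ℝ := (μ (Set.Ioi x)).toReal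

/-- The convolution of `μ` and `ν`. -/
noncomputable def mconv (μ ν : Measure ℝ) : Measure ℝ :=
  (μ.prod ν).map (fun p => p.1 + p.2)

/-- `μ` is subexponential: supported in `(0,∞)`, positive tail, and
`(1 - F^{*2}(x))/(1 - F(x)) → 2`. -/
def Subexp (μ : Measure ℝ) : Prop :=
  μ (Set.Iic 0) = 0 ∧ (∀ x, 0 < mtail μ x) ∧
  Tendsto (fun x => mtail (mconv μ μ) x / mtail μ x) atTop (nhds 2)

open Set

section Basics

variable {μ : Measure ℝ} [IsProbabilityMeasure μ]

lemma tail_antitone : Antitone (fun x => μ (Ioi x)) :=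
  fun _ _ h => measure_mono (Ioi_subset_Ioi h)

lemma tail_meas_shift (ν : Measure ℝ) (x : ℝ) :
    Measurable (fun u : ℝ => ν (Ioi (x - u))) := by
  have : Monotone (fun u : ℝ => ν (Ioi (x - u))) := by
    intro u v huv
    exact measure_mono (Ioi_subset_Ioi (by linarith))
  exact this.measurable

lemma tail_one (h0 : μ (Iic 0) = 0) {z : ℝ} (hz : z ≤ 0) : μ (Ioi z) = 1 := by
  have h1 : μ (Ioi (0:ℝ)) = 1 := by
    have := measure_add_measure_compl (μ := μ) (measurableSet_Iic (a := (0:ℝ)))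
    rw [h0, zero_add, compl_Iic] at this
    rw [this]; exact (measure_univ (μ := μ))
  refine le_antisymm (prob_le_one) ?_
  rw [← h1]
  exact measure_mono (Ioi_subset_Ioi hz)

lemma tail_pos_ne (hsub : Subexp μ) (x : ℝ) : μ (Ioi x) ≠ 0 := by
  have := hsub.2.1 x
  unfold mtail at this
  intro h
  rw [h] at this; simp at this

/-- tail tends to 0 in ℝ≥0∞ -/
lemma tail_tendsto_zero : Tendsto (fun x => μ (Ioi x)) atTop (nhds 0) := by
  have h : Tendsto (fun x : ℝ => μ (Iic x)) atTop (nhds (μ univ)) :=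
    tendsto_measure_Iic_atTop μ
  rw [measure_univ] at h
  have h2 : ∀ x : ℝ, μ (Ioi x) = 1 - μ (Iic x) := by
    intro x
    rw [← compl_Iic]
    rw [measure_compl measurableSet_Iic (measure_ne_top μ _), measure_univ]
  simp_rw [h2]
  have : Tendsto (fun x : ℝ => 1 - μ (Iic x)) atTop (nhds (1 - 1)) := by
    exact ENNReal.Tendsto.sub tendsto_const_nhds h (by simp)
  simpa using this

lemma mtail_tendsto_zero : Tendsto (fun x => mtail μ x) atTop (nhds 0) := by
  have := (ENNReal.tendsto_toReal (by simp : (0:ENNReal) ≠ ⊤)).comp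
    (tail_tendsto_zero (μ := μ))
  exact this

/-- convolution tail formula -/
lemma conv_tail (h0 : μ (Iic 0) = 0) {x : ℝ} (hx : 0 ≤ x) :
    mconv μ μ (Ioi x) = μ (Ioi x) + ∫⁻ u in Ioc 0 x, μ (Ioi (x - u)) ∂μ := by
  have hadd : Measurable (fun p : ℝ × ℝ => p.1 + p.2) := measurable_fst.add measurable_snd
  rw [mconv, Measure.map_apply hadd measurableSet_Ioi]
  have hpre : (fun p : ℝ × ℝ => p.1 + p.2) ⁻¹' Ioi x = {p : ℝ × ℝ | x < p.1 + p.2} := rfl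
  rw [hpre]
  have hms : MeasurableSet {p : ℝ × ℝ | x < p.1 + p.2} := by
    apply measurableSet_lt measurable_const (measurable_fst.add measurable_snd)
  rw [Measure.prod_apply hms]
  have key : ∀ u : ℝ, μ (Prod.mk u ⁻¹' {p : ℝ × ℝ | x < p.1 + p.2}) = μ (Ioi (x - u)) := by
    intro u
    congr 1
    ext v
    simp [sub_lt_iff_lt_add']
  simp_rw [key]
  -- split integral
  have hsplit0 : ∫⁻ u, μ (Ioi (x - u)) ∂μ = ∫⁻ u in Ioi 0, μ (Ioi (x - u)) ∂μ := by
    rw [← setLIntegral_univ]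
    apply setLIntegral_congr
    rw [show (Ioi (0:ℝ)) = (Iic 0)ᶜ by rw [compl_Iic]]
    exact (ae_eq_univ.mpr (by rwa [compl_compl])).symm
  rw [hsplit0]
  have hunion : Ioi (0:ℝ) = Ioc 0 x ∪ Ioi x := (Ioc_union_Ioi_eq_Ioi hx).symm
  rw [hunion, lintegral_union measurableSet_Ioi Ioc_disjoint_Ioi_same]
  have hconst : ∫⁻ u in Ioi x, μ (Ioi (x - u)) ∂μ = μ (Ioi x) := by
    rw [setLIntegral_congr_fun measurableSet_Ioi
      (fun u hu => tail_one h0 (by simp at hu; linarith))]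
    simp
  rw [hconst, add_comm]

noncomputable def Iint (μ : Measure ℝ) (x : ℝ) : ENNReal :=
  ∫⁻ u in Ioc 0 x, μ (Ioi (x - u)) ∂μ

lemma Iint_le_one (x : ℝ) : Iint μ x ≤ 1 := by
  calc Iint μ x ≤ ∫⁻ _ in Ioc 0 x, 1 ∂μ :=
        setLIntegral_mono measurable_const (fun u _ => prob_le_one)
    _ = μ (Ioc 0 x) := by simp
    _ ≤ 1 := prob_le_one

lemma Iint_ne_top (x : ℝ) : Iint μ x ≠ ⊤ :=
  fun h => by simpa [h] using Iint_le_one (μ := μ) x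

/-- subexponentiality in integral form -/
lemma Iint_ratio (hsub : Subexp μ) :
    Tendsto (fun x => (Iint μ x).toReal / mtail μ x) atTop (nhds 1) := by
  have h2 := hsub.2.2
  have key : ∀ᶠ x in atTop, mtail (mconv μ μ) x / mtail μ x - 1
      = (Iint μ x).toReal / mtail μ x := by
    filter_upwards [eventually_ge_atTop (0:ℝ)] with x hx
    have hf : mtail μ x ≠ 0 := ne_of_gt (hsub.2.1 x)
    have : mtail (mconv μ μ) x = mtail μ x + (Iint μ x).toReal := by
      rw [mtail, conv_tail hsub.1 hx,
        show (∫⁻ u in Ioc 0 x, μ (Ioi (x - u)) ∂μ) = Iint μ x from rfl,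
        ENNReal.toReal_add (measure_ne_top μ _) (Iint_ne_top x)]
      rfl
    rw [this]
    field_simp
    ring
  have : Tendsto (fun x => mtail (mconv μ μ) x / mtail μ x - 1) atTop (nhds (2 - 1)) :=
    h2.sub tendsto_const_nhds
  norm_num at this
  exact Tendsto.congr' key this

/-- long-tailedness, ENNReal form -/
lemma long_tail (hsub : Subexp μ) {H : ℝ} (hH : 0 ≤ H) {ε : ℝ} (hε : 0 < ε) :
    ∀ᶠ x in atTop, μ (Ioi (x - H)) ≤ ENNReal.ofReal (1 + ε) * μ (Ioi x) := by
  rcases eq_or_lt_of_le hH with hH0 | hH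
  · filter_upwards with x
    rw [← hH0, sub_zero]
    calc μ (Ioi x) = 1 * μ (Ioi x) := (one_mul _).symm
      _ ≤ ENNReal.ofReal (1 + ε) * μ (Ioi x) := by
          gcongr
          rw [show (1:ENNReal) = ENNReal.ofReal 1 by simp]
          exact ENNReal.ofReal_le_ofReal (by linarith)
  · -- H > 0
    set φ := mtail μ H with hφdef
    have hφ : 0 < φ := hsub.2.1 H
    set δ := ε * φ / (2 * (ε + 2)) with hδdef
    have hδ : 0 < δ := by positivity
    have hδφ : δ < φ := by
      rw [hδdef]
      have h1 : ε / (2 * (ε + 2)) < 1 := by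
        rw [div_lt_one (by positivity)]; nlinarith
      calc ε * φ / (2 * (ε + 2)) = (ε / (2 * (ε + 2))) * φ := by ring
        _ < 1 * φ := by exact mul_lt_mul_of_pos_right h1 hφ
        _ = φ := one_mul φ
    have hkey : δ * (2 + ε) ≤ ε * φ := by
      rw [hδdef]
      rw [div_mul_eq_mul_div, div_le_iff₀ (by positivity)]
      nlinarith [mul_pos hε hφ]
    have hI := Iint_ratio hsub
    have hIev : ∀ᶠ x in atTop, (Iint μ x).toReal ≤ (1 + δ) * mtail μ x := by
      have := hI.eventually (eventually_le_nhds (show (1:ℝ) < 1 + δ by linarith))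
      filter_upwards [this] with x hx
      have hf : 0 < mtail μ x := hsub.2.1 x
      calc (Iint μ x).toReal = (Iint μ x).toReal / mtail μ x * mtail μ x := by
            field_simp
        _ ≤ (1 + δ) * mtail μ x := by
            apply mul_le_mul_of_nonneg_right hx (le_of_lt hf)
    have hfev : ∀ᶠ x in atTop, mtail μ x ≤ δ :=
      (mtail_tendsto_zero (μ := μ)).eventually (eventually_le_nhds hδ)
    filter_upwards [hIev, hfev, eventually_ge_atTop H] with x hIx hfx hxH
    -- lower bound Iint
    have hsub1 : Ioc 0 H ⊆ Ioc 0 x := Ioc_subset_Ioc_right hxH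
    have hlow : (ENNReal.ofReal (mtail μ x)) * μ (Ioc 0 H)
        + (ENNReal.ofReal (mtail μ (x - H))) * μ (Ioc H x) ≤ Iint μ x := by
      have e1 : (ENNReal.ofReal (mtail μ x)) * μ (Ioc 0 H)
          ≤ ∫⁻ u in Ioc 0 H, μ (Ioi (x - u)) ∂μ := by
        rw [show (ENNReal.ofReal (mtail μ x)) * μ (Ioc 0 H)
          = ∫⁻ _ in Ioc 0 H, ENNReal.ofReal (mtail μ x) ∂μ by rw [setLIntegral_const]]
        apply setLIntegral_mono (tail_meas_shift μ x)
        intro u hu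
        rw [mtail, ENNReal.ofReal_toReal (measure_ne_top μ _)]
        exact tail_antitone (by linarith [hu.1])
      have e2 : (ENNReal.ofReal (mtail μ (x - H))) * μ (Ioc H x)
          ≤ ∫⁻ u in Ioc H x, μ (Ioi (x - u)) ∂μ := by
        rw [show (ENNReal.ofReal (mtail μ (x - H))) * μ (Ioc H x)
          = ∫⁻ _ in Ioc H x, ENNReal.ofReal (mtail μ (x - H)) ∂μ by rw [setLIntegral_const]]
        apply setLIntegral_mono (tail_meas_shift μ x)
        intro u hu
        rw [mtail, ENNReal.ofReal_toReal (measure_ne_top μ _)]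
        exact tail_antitone (by linarith [hu.1])
      calc (ENNReal.ofReal (mtail μ x)) * μ (Ioc 0 H)
            + (ENNReal.ofReal (mtail μ (x - H))) * μ (Ioc H x)
          ≤ (∫⁻ u in Ioc 0 H, μ (Ioi (x - u)) ∂μ) + ∫⁻ u in Ioc H x, μ (Ioi (x - u)) ∂μ :=
            add_le_add e1 e2
        _ = ∫⁻ u in Ioc 0 H ∪ Ioc H x, μ (Ioi (x - u)) ∂μ := by
            rw [lintegral_union measurableSet_Ioc (Ioc_disjoint_Ioc_of_le le_rfl)]
        _ = Iint μ x := by rw [Ioc_union_Ioc_eq_Ioc (le_of_lt hH) hxH]; rfl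
    -- convert to real
    have hm0 : (μ (Ioc 0 H)).toReal = 1 - φ := by
      have : μ (Ioc 0 H) + μ (Ioi H) = μ (Ioi 0) := by
        rw [← measure_union Ioc_disjoint_Ioi_same measurableSet_Ioi,
          Ioc_union_Ioi_eq_Ioi (le_of_lt hH)]
      rw [tail_one hsub.1 le_rfl] at this
      have h1 : (μ (Ioc 0 H)).toReal + (μ (Ioi H)).toReal = 1 := by
        rw [← ENNReal.toReal_add (measure_ne_top μ _) (measure_ne_top μ _), this]; simp
      rw [hφdef, mtail]; linarith
    have hm1 : (μ (Ioc H x)).toReal = φ - mtail μ x := by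
      have : μ (Ioc H x) + μ (Ioi x) = μ (Ioi H) := by
        rw [← measure_union Ioc_disjoint_Ioi_same measurableSet_Ioi,
          Ioc_union_Ioi_eq_Ioi hxH]
      have h1 : (μ (Ioc H x)).toReal + (μ (Ioi x)).toReal = (μ (Ioi H)).toReal := by
        rw [← ENNReal.toReal_add (measure_ne_top μ _) (measure_ne_top μ _), this]
      rw [hφdef, mtail, mtail]; linarith
    have hlowR : mtail μ x * (1 - φ) + mtail μ (x - H) * (φ - mtail μ x)
        ≤ (Iint μ x).toReal := by
      have := ENNReal.toReal_mono (Iint_ne_top x) hlow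
      rw [ENNReal.toReal_add (by finiteness) (by finiteness), ENNReal.toReal_mul,
        ENNReal.toReal_mul, ENNReal.toReal_ofReal (le_of_lt (hsub.2.1 x)),
        ENNReal.toReal_ofReal (le_of_lt (hsub.2.1 (x-H))), hm0, hm1] at this
      exact this
    -- algebra
    have hfpos : 0 < mtail μ x := hsub.2.1 x
    have halg : mtail μ (x - H) ≤ (1 + ε) * mtail μ x := by
      have h1 : mtail μ (x - H) * (φ - mtail μ x) ≤ (δ + φ) * mtail μ x := by
        nlinarith [hlowR, hIx]
      have h2 : (φ - δ) ≤ (φ - mtail μ x) := by linarith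
      have h3 : mtail μ (x - H) * (φ - δ) ≤ (δ + φ) * mtail μ x := by
        calc mtail μ (x - H) * (φ - δ) ≤ mtail μ (x - H) * (φ - mtail μ x) := by
              apply mul_le_mul_of_nonneg_left h2 (ENNReal.toReal_nonneg)
          _ ≤ (δ + φ) * mtail μ x := h1
      rw [← le_div_iff₀ (by linarith : (0:ℝ) < φ - δ)] at h3
      calc mtail μ (x - H) ≤ (δ + φ) * mtail μ x / (φ - δ) := h3
        _ ≤ (1 + ε) * mtail μ x := by
            rw [div_le_iff₀ (by linarith : (0:ℝ) < φ - δ)]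
            nlinarith
    calc μ (Ioi (x - H)) = ENNReal.ofReal (mtail μ (x - H)) := by
          rw [mtail, ENNReal.ofReal_toReal (measure_ne_top μ _)]
      _ ≤ ENNReal.ofReal ((1 + ε) * mtail μ x) := ENNReal.ofReal_le_ofReal halg
      _ = ENNReal.ofReal (1 + ε) * ENNReal.ofReal (mtail μ x) := by
          rw [ENNReal.ofReal_mul (by linarith)]
      _ = ENNReal.ofReal (1 + ε) * μ (Ioi x) := by
          rw [mtail, ENNReal.ofReal_toReal (measure_ne_top μ _)]


/-- the middle-range bound -/
lemma middle_bound (hsub : Subexp μ) {ε : ℝ} (hε : 0 < ε) :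
    ∃ H₀ : ℝ, 0 < H₀ ∧ ∃ X₁ : ℝ, ∀ H, H₀ ≤ H → ∀ x, X₁ ≤ x →
      (∫⁻ u in Ioc H (x - H), μ (Ioi (x - u)) ∂μ) ≤ ENNReal.ofReal ε * μ (Ioi x) := by
  obtain ⟨H₀', hH₀'⟩ := (mtail_tendsto_zero (μ := μ)).eventually
    (eventually_le_nhds (show (0:ℝ) < ε/2 by linarith)) |>.exists_forall_of_atTop
  set H₀ := max H₀' 1 with hH₀def
  have hH₀pos : 0 < H₀ := lt_of_lt_of_le one_pos (le_max_right _ _)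
  have hφ₀ : mtail μ H₀ ≤ ε/2 := hH₀' H₀ (le_max_left _ _)
  obtain ⟨X₁', hX₁'⟩ := ((Iint_ratio hsub).eventually
    (eventually_le_nhds (show (1:ℝ) < 1 + ε/2 by linarith))).exists_forall_of_atTop
  refine ⟨H₀, hH₀pos, max X₁' (2 * H₀), fun H hH x hx => ?_⟩
  have hxX : X₁' ≤ x := le_trans (le_max_left _ _) hx
  have hx2H : 2 * H₀ ≤ x := le_trans (le_max_right _ _) hx
  have hfpos : 0 < mtail μ x := hsub.2.1 x
  have hIle : (Iint μ x).toReal ≤ (1 + ε/2) * mtail μ x := by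
    have h := hX₁' x hxX
    calc (Iint μ x).toReal = (Iint μ x).toReal / mtail μ x * mtail μ x := by field_simp
      _ ≤ (1 + ε/2) * mtail μ x := mul_le_mul_of_nonneg_right h (le_of_lt hfpos)
  -- reduce to H₀
  have hmono : (∫⁻ u in Ioc H (x - H), μ (Ioi (x - u)) ∂μ)
      ≤ ∫⁻ u in Ioc H₀ (x - H₀), μ (Ioi (x - u)) ∂μ :=
    lintegral_mono_set (Ioc_subset_Ioc hH (by linarith))
  set M := ∫⁻ u in Ioc H₀ (x - H₀), μ (Ioi (x - u)) ∂μ with hM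
  have hMle : M + ENNReal.ofReal (mtail μ x) * μ (Ioc 0 H₀) ≤ Iint μ x := by
    have e1 : ENNReal.ofReal (mtail μ x) * μ (Ioc 0 H₀)
        ≤ ∫⁻ u in Ioc 0 H₀, μ (Ioi (x - u)) ∂μ := by
      rw [show ENNReal.ofReal (mtail μ x) * μ (Ioc 0 H₀)
        = ∫⁻ _ in Ioc 0 H₀, ENNReal.ofReal (mtail μ x) ∂μ by rw [setLIntegral_const]]
      apply setLIntegral_mono (tail_meas_shift μ x)
      intro u hu
      rw [mtail, ENNReal.ofReal_toReal (measure_ne_top μ _)]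
      exact tail_antitone (by linarith [hu.1])
    calc M + ENNReal.ofReal (mtail μ x) * μ (Ioc 0 H₀)
        ≤ M + ∫⁻ u in Ioc 0 H₀, μ (Ioi (x - u)) ∂μ := by gcongr
      _ = ∫⁻ u in Ioc 0 H₀ ∪ Ioc H₀ (x - H₀), μ (Ioi (x - u)) ∂μ := by
          rw [lintegral_union measurableSet_Ioc (Ioc_disjoint_Ioc_of_le le_rfl), add_comm]
      _ ≤ Iint μ x := by
          rw [Ioc_union_Ioc_eq_Ioc (le_of_lt hH₀pos) (by linarith)]
          exact lintegral_mono_set (Ioc_subset_Ioc_right (by linarith))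
  have hMne : M ≠ ⊤ := by
    intro h
    rw [h] at hMle
    simp [top_add] at hMle
    exact (Iint_ne_top (μ := μ) x) hMle
  have hm0 : (μ (Ioc 0 H₀)).toReal = 1 - mtail μ H₀ := by
    have h2 : μ (Ioc 0 H₀) + μ (Ioi H₀) = μ (Ioi 0) := by
      rw [← measure_union Ioc_disjoint_Ioi_same measurableSet_Ioi,
        Ioc_union_Ioi_eq_Ioi (le_of_lt hH₀pos)]
    rw [tail_one hsub.1 le_rfl] at h2
    have h1 : (μ (Ioc 0 H₀)).toReal + (μ (Ioi H₀)).toReal = 1 := by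
      rw [← ENNReal.toReal_add (measure_ne_top μ _) (measure_ne_top μ _), h2]; simp
    rw [mtail]; linarith
  have hMR : M.toReal ≤ ε * mtail μ x := by
    have h := ENNReal.toReal_mono (Iint_ne_top x) hMle
    rw [ENNReal.toReal_add hMne (by finiteness), ENNReal.toReal_mul,
      ENNReal.toReal_ofReal (le_of_lt hfpos), hm0] at h
    nlinarith [hsub.2.1 H₀]
  calc (∫⁻ u in Ioc H (x - H), μ (Ioi (x - u)) ∂μ) ≤ M := hmono
    _ = ENNReal.ofReal M.toReal := (ENNReal.ofReal_toReal hMne).symm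
    _ ≤ ENNReal.ofReal (ε * mtail μ x) := ENNReal.ofReal_le_ofReal hMR
    _ = ENNReal.ofReal ε * μ (Ioi x) := by
        rw [ENNReal.ofReal_mul (le_of_lt hε), mtail, ENNReal.ofReal_toReal (measure_ne_top μ _)]


end Basics

lemma scaled_tail (μ : Measure ℝ) {c : ℝ} (hc : 0 < c) (z : ℝ) :
    (μ.map (fun t => c * t)) (Ioi z) = μ (Ioi (z / c)) := by
  rw [Measure.map_apply (measurable_const_mul c) measurableSet_Ioi]
  congr 1
  ext t
  simp only [mem_preimage, mem_Ioi]
  rw [div_lt_iff₀' hc]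

section Prob
variable {Ω : Type*} [MeasurableSpace Ω] (P : Measure Ω) [IsProbabilityMeasure P]

/-- the fundamental conditioning formula for independent variables -/
lemma indep_tail_formula (U V : Ω → ℝ) (hU : Measurable U) (hV : Measurable V)
    (hind : IndepFun U V P) (x : ℝ) (A : Set ℝ) (hA : MeasurableSet A) :
    P {ω | x < U ω + V ω ∧ V ω ∈ A}
      = ∫⁻ v in A, (P.map U) (Ioi (x - v)) ∂(P.map V) := by
  have hpair : P.map (fun ω => (V ω, U ω)) = (P.map V).prod (P.map U) :=
    (indepFun_iff_map_prod_eq_prod_map_map hV.aemeasurable hU.aemeasurable).mp hind.symm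
  set T : Set (ℝ × ℝ) := {p : ℝ × ℝ | x < p.2 + p.1 ∧ p.1 ∈ A} with hT
  have hTm : MeasurableSet T :=
    (measurableSet_lt measurable_const (measurable_snd.add measurable_fst)).inter
      (measurable_fst hA)
  have hev : {ω | x < U ω + V ω ∧ V ω ∈ A} = (fun ω => (V ω, U ω)) ⁻¹' T := rfl
  rw [hev, ← Measure.map_apply (hV.prodMk hU) hTm, hpair, Measure.prod_apply hTm]
  have hsec : ∀ v : ℝ, (P.map U) (Prod.mk v ⁻¹' T)
      = A.indicator (fun v => (P.map U) (Ioi (x - v))) v := by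
    intro v
    by_cases hv : v ∈ A
    · rw [indicator_of_mem hv]
      congr 1
      ext u
      simp only [hT, mem_preimage, mem_setOf_eq, mem_Ioi, hv, and_true]
      constructor <;> intro h <;> linarith
    · rw [indicator_of_notMem hv]
      convert measure_empty (μ := P.map U)
      ext u
      simp [hT, hv]
  simp_rw [hsec]
  rw [lintegral_indicator hA]

variable {n : ℕ} (X : Fin n → Ω → ℝ) (μ : Measure ℝ) [IsProbabilityMeasure μ]
  (hXm : ∀ i, Measurable (X i)) (hXlaw : ∀ i, P.map (X i) = μ)
include hXm hXlaw

lemma map_scaled (i : Fin n) (c : ℝ) :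
    P.map (fun ω => c * X i ω) = μ.map (fun t => c * t) := by
  rw [show (fun ω => c * X i ω) = (fun t => c * t) ∘ X i from rfl,
    ← Measure.map_map (measurable_const_mul c) (hXm i), hXlaw i]

lemma event_tail (i : Fin n) {c : ℝ} (hc : 0 < c) (x : ℝ) :
    P {ω | x < c * X i ω} = μ (Ioi (x / c)) := by
  have : {ω | x < c * X i ω} = (fun ω => c * X i ω) ⁻¹' Ioi x := rfl
  rw [this, ← Measure.map_apply ((hXm i).const_mul c) measurableSet_Ioi,
    map_scaled P X μ hXm hXlaw i c, scaled_tail μ hc x]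

lemma X_pos_ae (h0 : μ (Iic 0) = 0) (i : Fin n) : P {ω | X i ω ≤ 0} = 0 := by
  have : {ω | X i ω ≤ 0} = X i ⁻¹' Iic 0 := rfl
  rw [this, ← Measure.map_apply (hXm i) measurableSet_Iic, hXlaw i, h0]

end Prob

section Main1
variable {Ω : Type*} [MeasurableSpace Ω] {P : Measure Ω} [IsProbabilityMeasure P]
  {n : ℕ} {X : Fin n → Ω → ℝ} {μ : Measure ℝ} [IsProbabilityMeasure μ]
  (hXm : ∀ i, Measurable (X i)) (hXlaw : ∀ i, P.map (X i) = μ)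
  (hXiid : iIndepFun X P)
  (hsub : Subexp μ) {a b : ℝ} (ha : 0 < a) (hab : a ≤ b)

include hXm hXlaw hXiid hsub ha hab in
lemma upper_bound (s : Finset (Fin n)) :
    ∀ ε : ℝ, 0 < ε → ∃ X₀ : ℝ, ∀ x, X₀ ≤ x → ∀ c : Fin n → ℝ, (∀ i, c i ∈ Icc a b) →
      P {ω | x < ∑ i ∈ s, c i * X i ω}
        ≤ ENNReal.ofReal (1 + ε) * ∑ i ∈ s, μ (Ioi (x / c i)) := by
  have hb : 0 < b := lt_of_lt_of_le ha hab
  induction s using Finset.induction_on with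
  | empty =>
    intro ε hε
    refine ⟨1, fun x hx c _ => ?_⟩
    have : {ω : Ω | x < ∑ i ∈ (∅ : Finset (Fin n)), c i * X i ω} = ∅ := by
      ext ω; simp only [Finset.sum_empty, mem_setOf_eq, mem_empty_iff_false, iff_false, not_lt]
      linarith
    rw [this]
    simp
  | @insert j s hj ih =>
    intro εt hεt
    set k := s.card with hk
    set ε := min 1 (εt/6) with hεdef
    have hε : 0 < ε := lt_min one_pos (by positivity)
    have hε1 : ε ≤ 1 := min_le_left _ _
    have hε6 : ε ≤ εt/6 := min_le_right _ _
    set ε' := εt / (12 * (k+1)) with hε'def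
    have hε' : 0 < ε' := by positivity
    obtain ⟨X₀', hIH⟩ := ih ε hε
    obtain ⟨H₀, hH₀pos, X₁, hmid⟩ := middle_bound hsub hε'
    obtain ⟨h₂, hh₂⟩ := ((mtail_tendsto_zero (μ := μ)).eventually
      (eventually_le_nhds hε')).exists_forall_of_atTop
    set h := max (max (b*H₀) (b*h₂)) (max X₀' 1) with hhdef
    have hh1 : (1:ℝ) ≤ h := le_trans (le_max_right _ _) (le_max_right _ _)
    have hhpos : 0 < h := lt_of_lt_of_le one_pos hh1
    have hhb : H₀ ≤ h / b := by
      rw [le_div_iff₀ hb, mul_comm]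
      exact le_trans (le_max_left _ _) (le_max_left _ _)
    have hhb2 : h₂ ≤ h / b := by
      rw [le_div_iff₀ hb, mul_comm]
      exact le_trans (le_max_right _ _) (le_max_left _ _)
    have hhX₀' : X₀' ≤ h := le_trans (le_max_left _ _) (le_max_right _ _)
    have hsmall : μ (Ioi (h/b)) ≤ ENNReal.ofReal ε' := by
      rw [show μ (Ioi (h/b)) = ENNReal.ofReal (mtail μ (h/b)) from
        (ENNReal.ofReal_toReal (measure_ne_top _ _)).symm]
      exact ENNReal.ofReal_le_ofReal (hh₂ (h/b) hhb2)
    obtain ⟨Z₁, hZ₁⟩ := (long_tail hsub (le_of_lt (div_pos hhpos ha)) hε).exists_forall_of_atTop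
    obtain ⟨Z₂, hZ₂⟩ :=
      (long_tail hsub (le_of_lt (div_pos hhpos hb)) one_pos).exists_forall_of_atTop
    refine ⟨max (max (b*Z₁) (b*Z₂)) (max (X₀' + h) (max (b*X₁) (2*h + 1))),
      fun x hx c hc => ?_⟩
    have hx1 : 2*h + 1 ≤ x := le_trans (le_max_right _ _ |>.trans (le_max_right _ _)
      |>.trans (le_max_right _ _)) hx
    have hxpos : 0 < x := by linarith
    have hxh : X₀' ≤ x - h := by
      have : X₀' + h ≤ x := le_trans ((le_max_left _ _).trans (le_max_right _ _)) hx
      linarith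
    have hwZ₁ : Z₁ ≤ x / b := by
      rw [le_div_iff₀ hb, mul_comm]
      exact le_trans ((le_max_left _ _).trans (le_max_left _ _)) hx
    have hwZ₂ : Z₂ ≤ x / b := by
      rw [le_div_iff₀ hb, mul_comm]
      exact le_trans ((le_max_right _ _).trans (le_max_left _ _)) hx
    have hwX₁ : X₁ ≤ x / b := by
      rw [le_div_iff₀ hb, mul_comm]
      exact le_trans ((le_max_left _ _).trans (le_max_right _ _) |>.trans (le_max_right _ _)) hx
    have hci : ∀ i, 0 < c i := fun i => lt_of_lt_of_le ha (hc i).1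
    have hcj : 0 < c j := hci j
    -- monotonicity facts
    have fact1 : ∀ i, x / b ≤ x / c i := fun i =>
      div_le_div_of_nonneg_left (le_of_lt hxpos) (hci i) (hc i).2
    have fact2 : ∀ i, ∀ z : ℝ, 0 ≤ z → z / c i ≤ z / a := fun i z hz =>
      div_le_div_of_nonneg_left hz ha (hc i).1
    -- the three events
    set U : Ω → ℝ := fun ω => ∑ i ∈ s, c i * X i ω with hU
    set V : Ω → ℝ := fun ω => c j * X j ω with hV
    have hUm : Measurable U := Finset.measurable_sum s (fun i _ => (hXm i).const_mul (c i))
    have hVm : Measurable V := (hXm j).const_mul (c j)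
    have hUV : IndepFun U V P := by
      have hYindep : iIndepFun
          (fun i => (fun t => c i * t) ∘ X i) P :=
        hXiid.comp _ (fun i => measurable_const_mul (c i))
      have := hYindep.indepFun_finsetSum_of_notMem
        (fun i => (measurable_const_mul (c i)).comp (hXm i)) hj
      have hsum : (∑ i ∈ s, (fun t => c i * t) ∘ X i) = U := by
        funext ω; simp [hU, Finset.sum_apply]
      rwa [hsum] at this
    have hEsub : {ω | x < ∑ i ∈ insert j s, c i * X i ω}
        ⊆ ({ω | x - h < V ω} ∪ {ω | x - h < U ω})
          ∪ {ω | x < U ω + V ω ∧ V ω ∈ Ioc h (x - h)} := by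
      intro ω hω
      simp only [mem_setOf_eq, Finset.sum_insert hj] at hω
      simp only [mem_union, mem_setOf_eq, mem_Ioc]
      by_cases h1 : x - h < V ω
      · exact Or.inl (Or.inl h1)
      by_cases h2 : x - h < U ω
      · exact Or.inl (Or.inr h2)
      push_neg at h1 h2
      exact Or.inr ⟨by simp only [hU, hV]; linarith, by simp only [hV]; linarith,
        h1⟩
    -- T1
    have hT1 : P {ω | x - h < V ω} ≤ ENNReal.ofReal (1+ε) * μ (Ioi (x / c j)) := by
      have he : P {ω | x - h < V ω} = μ (Ioi ((x-h) / c j)) :=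
        event_tail P X μ hXm hXlaw j hcj (x - h)
      rw [he]
      have hmono : x / c j - h / a ≤ (x - h) / c j := by
        rw [sub_div]
        have := fact2 j h (le_of_lt hhpos)
        linarith
      calc μ (Ioi ((x-h) / c j)) ≤ μ (Ioi (x / c j - h / a)) := tail_antitone hmono
        _ ≤ ENNReal.ofReal (1+ε) * μ (Ioi (x / c j)) := hZ₁ _ (le_trans hwZ₁ (fact1 j))
    -- per-i long-tail bound
    have hshift : ∀ i, μ (Ioi ((x - h) / c i)) ≤ ENNReal.ofReal (1+ε) * μ (Ioi (x / c i)) := by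
      intro i
      have hmono : x / c i - h / a ≤ (x - h) / c i := by
        rw [sub_div]
        have := fact2 i h (le_of_lt hhpos)
        linarith
      calc μ (Ioi ((x-h) / c i)) ≤ μ (Ioi (x / c i - h / a)) := tail_antitone hmono
        _ ≤ ENNReal.ofReal (1+ε) * μ (Ioi (x / c i)) := hZ₁ _ (le_trans hwZ₁ (fact1 i))
    -- T2
    have hT2 : P {ω | x - h < U ω}
        ≤ ENNReal.ofReal (1+ε) * (ENNReal.ofReal (1+ε) * ∑ i ∈ s, μ (Ioi (x / c i))) := by
      calc P {ω | x - h < U ω} ≤ ENNReal.ofReal (1+ε) * ∑ i ∈ s, μ (Ioi ((x-h) / c i)) :=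
            hIH (x-h) hxh c hc
        _ ≤ ENNReal.ofReal (1+ε) * ∑ i ∈ s, ENNReal.ofReal (1+ε) * μ (Ioi (x / c i)) := by
            gcongr with i hi
            exact hshift i
        _ = ENNReal.ofReal (1+ε) * (ENNReal.ofReal (1+ε) * ∑ i ∈ s, μ (Ioi (x / c i))) := by
            simp [Finset.mul_sum, mul_assoc]
    -- T3: the middle term
    have hT3 : P {ω | x < U ω + V ω ∧ V ω ∈ Ioc h (x - h)}
        ≤ ENNReal.ofReal (1+ε) * (ENNReal.ofReal (3*ε')
            * ((∑ i ∈ s, μ (Ioi (x / c i))) + (k : ENNReal) * μ (Ioi (x / c j)))) := by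
      rw [indep_tail_formula P U V hUm hVm hUV x _ measurableSet_Ioc,
        map_scaled P X μ hXm hXlaw j (c j),
        setLIntegral_map measurableSet_Ioc (tail_meas_shift (P.map U) x)
          (measurable_const_mul (c j))]
      have hpre : (fun t => c j * t) ⁻¹' Ioc h (x-h) = Ioc (h / c j) ((x-h) / c j) := by
        ext t
        simp only [mem_preimage, mem_Ioc]
        constructor
        · rintro ⟨h1, h2⟩
          exact ⟨(div_lt_iff₀ hcj).mpr (by linarith [mul_comm (c j) t]),
            (le_div_iff₀ hcj).mpr (by linarith [mul_comm (c j) t])⟩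
        · rintro ⟨h1, h2⟩
          rw [div_lt_iff₀ hcj] at h1
          rw [le_div_iff₀ hcj] at h2
          exact ⟨by linarith [mul_comm (c j) t], by linarith [mul_comm (c j) t]⟩
      rw [hpre]
      set D := Ioc (h / c j) ((x-h) / c j) with hD
      -- facts about t ∈ D
      have htD : ∀ t ∈ D, 0 < t ∧ h ≤ x - c j * t := by
        intro t ht
        obtain ⟨ht1, ht2⟩ := ht
        have h1 : 0 < h / c j := div_pos hhpos hcj
        have h2 : c j * t ≤ x - h := by
          rw [le_div_iff₀ hcj] at ht2
          linarith [mul_comm (c j) t]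
        exact ⟨by linarith, by linarith⟩
      -- measurability of the ψᵢ
      have hψm : ∀ i : Fin n, Measurable (fun t : ℝ => μ (Ioi ((x - c j * t)/ c i))) := by
        intro i
        have hmono : Monotone (fun t : ℝ => μ (Ioi ((x - c j * t)/ c i))) := by
          intro t1 t2 h12
          apply tail_antitone
          have h1 : c j * t1 ≤ c j * t2 := mul_le_mul_of_nonneg_left h12 (le_of_lt hcj)
          exact (div_le_div_iff_of_pos_right (hci i)).mpr (by linarith)
        exact hmono.measurable
      -- pointwise bound by the sum of ψᵢ
      have hpt : ∀ t ∈ D, (P.map U) (Ioi (x - c j * t))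
          ≤ ENNReal.ofReal (1+ε) * ∑ i ∈ s, μ (Ioi ((x - c j * t) / c i)) := by
        intro t ht
        obtain ⟨htpos, hth⟩ := htD t ht
        have hUm' : (P.map U) (Ioi (x - c j * t)) = P {ω | x - c j * t < U ω} := by
          rw [Measure.map_apply hUm measurableSet_Ioi]
          rfl
        rw [hUm']
        exact hIH _ (le_trans hhX₀' hth) c hc
      -- per-i bound on the middle integral
      have hJ : ∀ i ∈ s, ∫⁻ t in D, μ (Ioi ((x - c j * t) / c i)) ∂μ
          ≤ ENNReal.ofReal (3*ε') * (μ (Ioi (x / c i)) + μ (Ioi (x / c j))) := by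
        intro i _
        set M := max (c i) (c j) with hM
        have hMpos : 0 < M := lt_of_lt_of_le (hci i) (le_max_left _ _)
        have hMb : M ≤ b := max_le (hc i).2 (hc j).2
        set y := x / M with hy
        have hxbley : x / b ≤ y := div_le_div_of_nonneg_left (le_of_lt hxpos) hMpos hMb
        have hyX₁ : X₁ ≤ y := le_trans hwX₁ hxbley
        have hyZ₂ : Z₂ ≤ y := le_trans hwZ₂ hxbley
        set z := y - h/b with hzdef
        have hDlow : ∀ t ∈ D, h/b < t := by
          intro t ht
          have hbb : h/b ≤ h/c j := div_le_div_of_nonneg_left (le_of_lt hhpos) hcj (hc j).2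
          exact lt_of_le_of_lt hbb ht.1
        -- Part 1
        have hP1 : ∫⁻ t in D ∩ Iic z, μ (Ioi ((x - c j * t) / c i)) ∂μ
            ≤ ENNReal.ofReal ε' * μ (Ioi y) := by
          have step1 : ∀ t ∈ D ∩ Iic z, μ (Ioi ((x - c j * t) / c i)) ≤ μ (Ioi (y - t)) := by
            intro t ht
            obtain ⟨htD', _⟩ := ht
            obtain ⟨htpos, hth⟩ := htD t htD'
            apply tail_antitone
            have h0 : (0:ℝ) ≤ x - c j * t := by linarith
            have h1 : (x - c j * t)/M ≤ (x - c j * t)/ c i :=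
              div_le_div_of_nonneg_left h0 (hci i) (le_max_left _ _)
            have h2 : c j * t ≤ M * t :=
              mul_le_mul_of_nonneg_right (le_max_right _ _) (le_of_lt htpos)
            have h3 : (c j * t)/M ≤ t := by
              rw [div_le_iff₀ hMpos]
              calc c j * t ≤ M * t := h2
                _ = t * M := mul_comm M t
            have h4 : y - t ≤ (x - c j * t)/M := by
              rw [sub_div]
              rw [hy]
              linarith
            linarith
          calc ∫⁻ t in D ∩ Iic z, μ (Ioi ((x - c j * t) / c i)) ∂μ
              ≤ ∫⁻ t in D ∩ Iic z, μ (Ioi (y - t)) ∂μ :=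
                setLIntegral_mono (tail_meas_shift μ y) step1
            _ ≤ ∫⁻ t in Ioc (h/b) (y - h/b), μ (Ioi (y - t)) ∂μ := by
                apply lintegral_mono_set
                intro t ht
                exact ⟨hDlow t ht.1, by rw [← hzdef]; exact ht.2⟩
            _ ≤ ENNReal.ofReal ε' * μ (Ioi y) := hmid (h/b) hhb y hyX₁
        -- Part 2
        have hP2 : ∫⁻ t in D ∩ Ioi z, μ (Ioi ((x - c j * t) / c i)) ∂μ
            ≤ ENNReal.ofReal ε' * (ENNReal.ofReal (1+1) * μ (Ioi y)) := by
          have step1 : ∀ t ∈ D ∩ Ioi z, μ (Ioi ((x - c j * t) / c i)) ≤ μ (Ioi (h/b)) := by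
            intro t ht
            obtain ⟨htD', _⟩ := ht
            obtain ⟨_, hth⟩ := htD t htD'
            apply tail_antitone
            calc h/b ≤ h/c i := div_le_div_of_nonneg_left (le_of_lt hhpos) (hci i) (hc i).2
              _ ≤ (x - c j * t)/c i := (div_le_div_iff_of_pos_right (hci i)).mpr hth
          calc ∫⁻ t in D ∩ Ioi z, μ (Ioi ((x - c j * t) / c i)) ∂μ
              ≤ ∫⁻ _t in D ∩ Ioi z, μ (Ioi (h/b)) ∂μ := setLIntegral_mono measurable_const step1
            _ = μ (Ioi (h/b)) * μ (D ∩ Ioi z) := setLIntegral_const _ _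
            _ ≤ ENNReal.ofReal ε' * μ (Ioi z) :=
                mul_le_mul' hsmall (measure_mono inter_subset_right)
            _ ≤ ENNReal.ofReal ε' * (ENNReal.ofReal (1+1) * μ (Ioi y)) := by
                gcongr
                exact hZ₂ _ hyZ₂
        -- combine parts
        have hsplitD : ∫⁻ t in D, μ (Ioi ((x - c j * t) / c i)) ∂μ
            ≤ ENNReal.ofReal (3*ε') * μ (Ioi y) := by
          have hcover : D ⊆ (D ∩ Iic z) ∪ (D ∩ Ioi z) := by
            intro t ht
            by_cases h' : t ≤ z
            · exact Or.inl ⟨ht, h'⟩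
            · exact Or.inr ⟨ht, lt_of_not_ge h'⟩
          calc ∫⁻ t in D, μ (Ioi ((x - c j * t) / c i)) ∂μ
              ≤ ∫⁻ t in (D ∩ Iic z) ∪ (D ∩ Ioi z), μ (Ioi ((x - c j * t) / c i)) ∂μ :=
                lintegral_mono_set hcover
            _ ≤ (∫⁻ t in D ∩ Iic z, μ (Ioi ((x - c j * t) / c i)) ∂μ)
                + ∫⁻ t in D ∩ Ioi z, μ (Ioi ((x - c j * t) / c i)) ∂μ :=
                lintegral_union_le _ _ _
            _ ≤ ENNReal.ofReal ε' * μ (Ioi y)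
                + ENNReal.ofReal ε' * (ENNReal.ofReal (1+1) * μ (Ioi y)) := add_le_add hP1 hP2
            _ = (ENNReal.ofReal ε' + ENNReal.ofReal ε' * ENNReal.ofReal (1+1)) * μ (Ioi y) := by
                ring
            _ = ENNReal.ofReal (3*ε') * μ (Ioi y) := by
                rw [← ENNReal.ofReal_mul (le_of_lt hε'), ← ENNReal.ofReal_add (le_of_lt hε')
                  (by positivity)]
                rw [show ε' + ε' * (1+1) = 3*ε' by ring]
        -- μ (Ioi y) ≤ sum of the two tails
        have hysum : μ (Ioi y) ≤ μ (Ioi (x / c i)) + μ (Ioi (x / c j)) := by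
          rcases le_total (c i) (c j) with hle | hle
          · have : y = x / c j := by rw [hy, hM, max_eq_right hle]
            rw [this]
            exact le_add_self
          · have : y = x / c i := by rw [hy, hM, max_eq_left hle]
            rw [this]
            exact self_le_add_right _ _
        calc ∫⁻ t in D, μ (Ioi ((x - c j * t) / c i)) ∂μ
            ≤ ENNReal.ofReal (3*ε') * μ (Ioi y) := hsplitD
          _ ≤ ENNReal.ofReal (3*ε') * (μ (Ioi (x / c i)) + μ (Ioi (x / c j))) := by gcongr
      -- put the middle together
      calc ∫⁻ t in D, (P.map U) (Ioi (x - c j * t)) ∂μ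
          ≤ ∫⁻ t in D, ENNReal.ofReal (1+ε) * ∑ i ∈ s, μ (Ioi ((x - c j * t) / c i)) ∂μ :=
            setLIntegral_mono ((Finset.measurable_sum s (fun i _ => hψm i)).const_mul _) hpt
        _ = ENNReal.ofReal (1+ε) * ∑ i ∈ s, ∫⁻ t in D, μ (Ioi ((x - c j * t) / c i)) ∂μ := by
            rw [lintegral_const_mul _ (Finset.measurable_sum s (fun i _ => hψm i)),
              lintegral_finset_sum' s (fun i _ => (hψm i).aemeasurable)]
        _ ≤ ENNReal.ofReal (1+ε)
            * ∑ i ∈ s, ENNReal.ofReal (3*ε') * (μ (Ioi (x / c i)) + μ (Ioi (x / c j))) := by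
            gcongr with i hi
            exact hJ i hi
        _ = ENNReal.ofReal (1+ε) * (ENNReal.ofReal (3*ε')
            * ((∑ i ∈ s, μ (Ioi (x / c i))) + (k : ENNReal) * μ (Ioi (x / c j)))) := by
            rw [← Finset.mul_sum, Finset.sum_add_distrib, Finset.sum_const, nsmul_eq_mul, hk]
    -- final assembly
    have hε'k : ε' * (12*((k:ℝ)+1)) = εt := by
      rw [hε'def]
      field_simp
    have cA : ENNReal.ofReal (1+ε) + ENNReal.ofReal (1+ε) * ENNReal.ofReal (3*ε') * (k : ENNReal)
        ≤ ENNReal.ofReal (1+εt) := by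
      rw [show ((k : ENNReal)) = ENNReal.ofReal (k : ℝ) by rw [ENNReal.ofReal_natCast],
        ← ENNReal.ofReal_mul (by linarith), ← ENNReal.ofReal_mul (by positivity),
        ← ENNReal.ofReal_add (by linarith) (by positivity)]
      apply ENNReal.ofReal_le_ofReal
      have hkε' : 0 ≤ (k:ℝ) * ε' := by positivity
      have hA1 : (1+ε) * (3*ε') * (k:ℝ) ≤ 2 * (3 * ((k:ℝ) * ε')) := by nlinarith
      have hA2 : (k:ℝ) * ε' * 12 ≤ εt := by nlinarith
      nlinarith
    have cB : ENNReal.ofReal (1+ε) * ENNReal.ofReal (1+ε)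
        + ENNReal.ofReal (1+ε) * ENNReal.ofReal (3*ε') ≤ ENNReal.ofReal (1+εt) := by
      rw [← ENNReal.ofReal_mul (by linarith), ← ENNReal.ofReal_mul (by linarith),
        ← ENNReal.ofReal_add (by nlinarith) (by positivity)]
      apply ENNReal.ofReal_le_ofReal
      have h6 : 6 * ε' ≤ εt / 2 := by nlinarith [Nat.cast_nonneg (α := ℝ) k]
      nlinarith
    calc P {ω | x < ∑ i ∈ insert j s, c i * X i ω}
        ≤ P (({ω | x - h < V ω} ∪ {ω | x - h < U ω})
            ∪ {ω | x < U ω + V ω ∧ V ω ∈ Ioc h (x - h)}) := measure_mono hEsub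
      _ ≤ P ({ω | x - h < V ω} ∪ {ω | x - h < U ω})
            + P {ω | x < U ω + V ω ∧ V ω ∈ Ioc h (x - h)} := measure_union_le _ _
      _ ≤ (P {ω | x - h < V ω} + P {ω | x - h < U ω})
            + P {ω | x < U ω + V ω ∧ V ω ∈ Ioc h (x - h)} :=
          add_le_add_left (measure_union_le _ _) _
      _ ≤ (ENNReal.ofReal (1+ε) * μ (Ioi (x / c j))
            + ENNReal.ofReal (1+ε) * (ENNReal.ofReal (1+ε) * ∑ i ∈ s, μ (Ioi (x / c i))))
            + ENNReal.ofReal (1+ε) * (ENNReal.ofReal (3*ε')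
              * ((∑ i ∈ s, μ (Ioi (x / c i))) + (k : ENNReal) * μ (Ioi (x / c j)))) :=
          add_le_add (add_le_add hT1 hT2) hT3
      _ = (ENNReal.ofReal (1+ε)
            + ENNReal.ofReal (1+ε) * ENNReal.ofReal (3*ε') * (k : ENNReal)) * μ (Ioi (x / c j))
          + (ENNReal.ofReal (1+ε) * ENNReal.ofReal (1+ε)
            + ENNReal.ofReal (1+ε) * ENNReal.ofReal (3*ε')) * ∑ i ∈ s, μ (Ioi (x / c i)) := by
          ring
      _ ≤ ENNReal.ofReal (1+εt) * μ (Ioi (x / c j))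
            + ENNReal.ofReal (1+εt) * ∑ i ∈ s, μ (Ioi (x / c i)) :=
          add_le_add (mul_le_mul_left cA _) (mul_le_mul_left cB _)
      _ = ENNReal.ofReal (1+εt) * (μ (Ioi (x / c j)) + ∑ i ∈ s, μ (Ioi (x / c i))) :=
          (mul_add _ _ _).symm
      _ = ENNReal.ofReal (1+εt) * ∑ i ∈ insert j s, μ (Ioi (x / c i)) := by
          rw [Finset.sum_insert hj]
end Main1

section Main2
variable {Ω : Type*} [MeasurableSpace Ω] {P : Measure Ω} [IsProbabilityMeasure P]
  {n : ℕ} {X : Fin n → Ω → ℝ} {μ : Measure ℝ} [IsProbabilityMeasure μ]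
  (hXm : ∀ i, Measurable (X i)) (hXlaw : ∀ i, P.map (X i) = μ)
  (hXiid : iIndepFun X P)
  (h0 : μ (Iic 0) = 0) {a b : ℝ} (ha : 0 < a) (hab : a ≤ b)

include hXm hXlaw hXiid in
lemma bonferroni (c : Fin n → ℝ) (x : ℝ) (s : Finset (Fin n)) :
    (∑ i ∈ s, (P (X i ⁻¹' Ioi (x / c i))).toReal)
      - (∑ i ∈ s, (P (X i ⁻¹' Ioi (x / c i))).toReal)^2
      ≤ (P (⋃ i ∈ s, X i ⁻¹' Ioi (x / c i))).toReal := by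
  classical
  induction s using Finset.induction_on with
  | empty => simp
  | @insert j s hj ih =>
    set A : Fin n → Set Ω := fun i => X i ⁻¹' Ioi (x / c i) with hA
    have hAm : ∀ i, MeasurableSet (A i) := fun i => (hXm i) measurableSet_Ioi
    set p : Fin n → ℝ := fun i => (P (A i)).toReal with hp
    have hppos : ∀ i, 0 ≤ p i := fun i => ENNReal.toReal_nonneg
    set B : Set Ω := ⋃ i ∈ s, A i with hB
    have hBm : MeasurableSet B := MeasurableSet.biUnion s.countable_toSet (fun i _ => hAm i)
    -- independence of pairs
    have hpair : ∀ i ∈ s, (P (A j ∩ A i)).toReal = p j * p i := by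
      intro i hi
      have hne : j ≠ i := fun h => hj (by rw [h]; exact hi)
      have hind : IndepFun (X j) (X i) P := hXiid.indepFun hne
      have := hind.measure_inter_preimage_eq_mul (s := Ioi (x / c j)) (t := Ioi (x / c i))
        measurableSet_Ioi measurableSet_Ioi
      rw [hp]
      simp only [hA]
      rw [this, ENNReal.toReal_mul]
    -- inclusion-exclusion
    have hincl : (P (A j ∪ B)).toReal + (P (A j ∩ B)).toReal = p j + (P B).toReal := by
      have := measure_union_add_inter (μ := P) (A j) hBm
      have h1 : (P (A j ∪ B) + P (A j ∩ B)).toReal = (P (A j) + P B).toReal := by rw [this]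
      rw [ENNReal.toReal_add (measure_ne_top _ _) (measure_ne_top _ _),
        ENNReal.toReal_add (measure_ne_top _ _) (measure_ne_top _ _)] at h1
      exact h1
    -- intersection bound
    have hinter : (P (A j ∩ B)).toReal ≤ p j * ∑ i ∈ s, p i := by
      have hsub : A j ∩ B = ⋃ i ∈ s, (A j ∩ A i) := by
        rw [hB, inter_iUnion₂]
      have h1 : P (A j ∩ B) ≤ ∑ i ∈ s, P (A j ∩ A i) := by
        rw [hsub]
        exact measure_biUnion_finset_le s _
      have h2 : (P (A j ∩ B)).toReal ≤ (∑ i ∈ s, P (A j ∩ A i)).toReal :=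
        ENNReal.toReal_mono (by exact ENNReal.sum_ne_top.mpr fun i _ => measure_ne_top _ _) h1
      rw [ENNReal.toReal_sum (fun i _ => measure_ne_top _ _)] at h2
      calc (P (A j ∩ B)).toReal ≤ ∑ i ∈ s, (P (A j ∩ A i)).toReal := h2
        _ = ∑ i ∈ s, p j * p i := Finset.sum_congr rfl hpair
        _ = p j * ∑ i ∈ s, p i := (Finset.mul_sum _ _ _).symm
    -- assemble
    rw [Finset.sum_insert hj, Finset.set_biUnion_insert]
    have hAs : (0:ℝ) ≤ ∑ i ∈ s, p i := Finset.sum_nonneg (fun i _ => hppos i)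
    have := ih
    nlinarith [hppos j, hAs, this]

include hXm hXlaw hXiid h0 ha hab in
lemma lower_bound : ∀ ε : ℝ, 0 < ε → ∃ X₀ : ℝ, ∀ x, X₀ ≤ x → ∀ c : Fin n → ℝ,
    (∀ i, c i ∈ Icc a b) →
    (1 - ε) * ∑ i, (μ (Ioi (x / c i))).toReal ≤ (P {ω | x < ∑ i, c i * X i ω}).toReal := by
  intro ε hε
  have hb : 0 < b := lt_of_lt_of_le ha hab
  have hεn : 0 < ε / (n+1) := by positivity
  obtain ⟨X₂, hX₂⟩ := ((mtail_tendsto_zero (μ := μ)).eventually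
    (eventually_le_nhds hεn)).exists_forall_of_atTop
  refine ⟨max (b * X₂) 1, fun x hx c hc => ?_⟩
  have hxpos : 0 < x := lt_of_lt_of_le one_pos (le_trans (le_max_right _ _) hx)
  have hxX₂ : X₂ ≤ x / b := by
    rw [le_div_iff₀ hb, mul_comm]
    exact le_trans (le_max_left _ _) hx
  have hci : ∀ i, 0 < c i := fun i => lt_of_lt_of_le ha (hc i).1
  set A : Fin n → Set Ω := fun i => X i ⁻¹' Ioi (x / c i) with hA
  set p : Fin n → ℝ := fun i => (P (A i)).toReal with hp
  have hPA : ∀ i, P (A i) = μ (Ioi (x / c i)) := by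
    intro i
    rw [hA]
    simp only
    rw [← Measure.map_apply (hXm i) measurableSet_Ioi, hXlaw i]
  -- the union is a.s. contained in the event
  have hNull : P (⋃ i, {ω | X i ω ≤ 0}) = 0 :=
    measure_iUnion_null (fun i => X_pos_ae P X μ hXm hXlaw h0 i)
  have hunion : P (⋃ i ∈ Finset.univ, A i) ≤ P {ω | x < ∑ i, c i * X i ω} := by
    have hsub : (⋃ i ∈ Finset.univ, A i) \ (⋃ i, {ω | X i ω ≤ 0})
        ⊆ {ω | x < ∑ i, c i * X i ω} := by
      intro ω hω
      obtain ⟨hω1, hω2⟩ := hω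
      simp only [Finset.mem_univ, iUnion_true, mem_iUnion] at hω1
      obtain ⟨i, hi⟩ := hω1
      simp only [mem_iUnion, mem_setOf_eq, not_exists, not_le] at hω2
      have hterm : x < c i * X i ω := by
        have : x / c i < X i ω := hi
        rw [div_lt_iff₀ (hci i)] at this
        linarith [mul_comm (X i ω) (c i)]
      have hsum : c i * X i ω ≤ ∑ k, c k * X k ω := by
        apply Finset.single_le_sum (f := fun k => c k * X k ω)
          (fun k _ => le_of_lt (mul_pos (hci k) (hω2 k))) (Finset.mem_univ i)
      simp only [mem_setOf_eq]
      linarith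
    calc P (⋃ i ∈ Finset.univ, A i)
        = P ((⋃ i ∈ Finset.univ, A i) \ (⋃ i, {ω | X i ω ≤ 0})) :=
          (measure_diff_null hNull).symm
      _ ≤ P {ω | x < ∑ i, c i * X i ω} := measure_mono hsub
  -- sum is small
  have hsmall : ∑ i, p i ≤ ε := by
    have hper : ∀ i, p i ≤ ε / (n+1) := by
      intro i
      rw [hp]
      simp only
      rw [hPA i]
      have h1 : x / b ≤ x / c i := div_le_div_of_nonneg_left (le_of_lt hxpos) (hci i) (hc i).2
      calc (μ (Ioi (x / c i))).toReal ≤ (μ (Ioi (x / b))).toReal :=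
            ENNReal.toReal_mono (measure_ne_top _ _) (tail_antitone h1)
        _ ≤ ε / (n+1) := hX₂ _ hxX₂
    calc ∑ i, p i ≤ ∑ _i : Fin n, ε / (n+1) := Finset.sum_le_sum (fun i _ => hper i)
      _ ≤ ε := by
          rw [Finset.sum_const, Finset.card_univ, Fintype.card_fin, nsmul_eq_mul]
          have hn1 : (n:ℝ) ≤ (n:ℝ) + 1 := by linarith
          calc (n:ℝ) * (ε / (n+1)) ≤ ((n:ℝ)+1) * (ε / (n+1)) :=
                mul_le_mul_of_nonneg_right hn1 (le_of_lt hεn)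
            _ = ε := by field_simp
  -- finish via Bonferroni
  have hbon := bonferroni hXm hXlaw hXiid c x Finset.univ
  have hden : ∑ i, (μ (Ioi (x / c i))).toReal = ∑ i, p i := by
    apply Finset.sum_congr rfl
    intro i _
    rw [hp]
    simp only
    rw [hPA i]
  rw [hden]
  set den := ∑ i, p i with hdendef
  have hden0 : 0 ≤ den := Finset.sum_nonneg (fun i _ => ENNReal.toReal_nonneg)
  have hPP : (P (⋃ i ∈ Finset.univ, A i)).toReal ≤ (P {ω | x < ∑ i, c i * X i ω}).toReal :=
    ENNReal.toReal_mono (measure_ne_top _ _) hunion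
  have hbon' : den - den^2 ≤ (P (⋃ i ∈ Finset.univ, A i)).toReal := hbon
  nlinarith [hsmall]
end Main2


/-- Tang–Tsitsiashvili (2003), Proposition 5.1: for i.i.d. subexponential `X₁,…,Xₙ` and
`0 < a ≤ b < ∞`, `P(Σ cᵢXᵢ > x) ∼ Σ P(cᵢXᵢ > x)` uniformly in `(c₁,…,cₙ) ∈ [a,b]ⁿ`. -/
theorem weighted_sum_uniform_asymptotics {Ω : Type*} [MeasurableSpace Ω]
    (P : Measure Ω) [IsProbabilityMeasure P] (n : ℕ) (hn : 1 ≤ n)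
    (X : Fin n → Ω → ℝ) (μ : Measure ℝ) [IsProbabilityMeasure μ]
    (hXm : ∀ i, Measurable (X i)) (hXlaw : ∀ i, P.map (X i) = μ)
    (hXiid : iIndepFun X P)
    (hsub : Subexp μ) (a b : ℝ) (ha : 0 < a) (hab : a ≤ b) :
    TendstoUniformlyOn
      (fun x (c : Fin n → ℝ) =>
        (P {ω | x < ∑ i, c i * X i ω}).toReal / ∑ i, (P {ω | x < c i * X i ω}).toReal)
      (fun _ => 1) atTop {c : Fin n → ℝ | ∀ i, c i ∈ Set.Icc a b} := by
  rw [Metric.tendstoUniformlyOn_iff]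
  intro ε hε
  set ε2 := min (ε/2) (1/2) with hε2def
  have hε2 : 0 < ε2 := lt_min (by linarith) (by norm_num)
  have hε2ε : ε2 < ε := lt_of_le_of_lt (min_le_left _ _) (by linarith)
  obtain ⟨X₀u, hup⟩ := upper_bound hXm hXlaw hXiid hsub ha hab Finset.univ ε2 hε2
  obtain ⟨X₀l, hlow⟩ := lower_bound hXm hXlaw hXiid hsub.1 ha hab ε2 hε2
  filter_upwards [eventually_ge_atTop (max X₀u X₀l)] with x hx
  intro c hc
  have hc : ∀ i, c i ∈ Icc a b := hc
  have hci : ∀ i, 0 < c i := fun i => lt_of_lt_of_le ha (hc i).1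
  have hev : ∀ i, P {ω | x < c i * X i ω} = μ (Ioi (x / c i)) :=
    fun i => event_tail P X μ hXm hXlaw i (hci i) x
  set den := ∑ i, (P {ω | x < c i * X i ω}).toReal with hden
  have hdenμ : den = ∑ i, (μ (Ioi (x / c i))).toReal := by
    apply Finset.sum_congr rfl
    intro i _
    rw [hev i]
  have hdenpos : 0 < den := by
    have hne : Nonempty (Fin n) := ⟨⟨0, hn⟩⟩
    apply Finset.sum_pos _ Finset.univ_nonempty
    intro i _
    rw [hev i]
    exact hsub.2.1 (x / c i)
  set num := (P {ω | x < ∑ i, c i * X i ω}).toReal with hnum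
  have hnum0 : 0 ≤ num := ENNReal.toReal_nonneg
  -- upper
  have hupper : num ≤ (1 + ε2) * den := by
    have h1 := hup x (le_trans (le_max_left _ _) hx) c hc
    have h2 : (P {ω | x < ∑ i, c i * X i ω}).toReal
        ≤ (ENNReal.ofReal (1 + ε2) * ∑ i, μ (Ioi (x / c i))).toReal := by
      apply ENNReal.toReal_mono _ h1
      apply ENNReal.mul_ne_top ENNReal.ofReal_ne_top
      exact ENNReal.sum_ne_top.mpr (fun i _ => measure_ne_top _ _)
    rw [ENNReal.toReal_mul, ENNReal.toReal_ofReal (by linarith),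
      ENNReal.toReal_sum (fun i _ => measure_ne_top _ _)] at h2
    rw [hnum, hdenμ]
    exact h2
  -- lower
  have hlower : (1 - ε2) * den ≤ num := by
    rw [hdenμ]
    exact hlow x (le_trans (le_max_right _ _) hx) c hc
  -- conclude
  have hr1 : 1 - ε2 ≤ num / den := (le_div_iff₀ hdenpos).mpr hlower
  have hr2 : num / den ≤ 1 + ε2 := (div_le_iff₀ hdenpos).mpr hupper
  rw [Real.dist_eq]
  have : |1 - num / den| ≤ ε2 := by
    rw [abs_le]
    constructor <;> linarith
  linarith
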